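/- Let a, b ∈ ℝ² be linearly independent vectors and define κ(a,b) := ⟨a,b⟩/(‖a‖·‖b‖), ρ(a,b) := ‖a‖/‖b‖ and φ(a,b) := (κ(a,b) − ρ(a,b))/√(1 − κ(a,b)²). Then for every ω ∈ (0, π), the unoriented angle between a and b − a equals ω if and only if φ(a,b) = cos ω / sin ω. In particular, cot of the unoriented angle between a and b − a equals φ(a,b). -/

import Mathlib

open scoped RealInnerProductSpace

noncomputable def kappa (a b : EuclideanSpace ℝ (Fin 2)) : ℝ :=
  ⟪a, b⟫ / (‖a‖ * ‖b‖)

noncomputable def rho (a b : EuclideanSpace ℝ (Fin 2)) : ℝ :=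
  ‖a‖ / ‖b‖

noncomputable def phi (a b : EuclideanSpace ℝ (Fin 2)) : ℝ :=
  (kappa a b - rho a b) / Real.sqrt (1 - (kappa a b) ^ 2)

/-- The characteristic function `φ` parametrizes the circular arcs of constant scattering
angle: for linearly independent `a, b` and `ω ∈ (0, π)`, the unoriented angle between `a`
and `b − a` equals `ω` iff `φ(a,b) = cos ω / sin ω`; in particular
`cot (∠(a, b − a)) = φ(a,b)`. -/
theorem phi_eq_cot_angle (a b : EuclideanSpace ℝ (Fin 2))
    (h : LinearIndependent ℝ ![a, b]) (ω : ℝ) (hω : ω ∈ Set.Ioo 0 Real.pi) :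
    (InnerProductGeometry.angle a (b - a) = ω ↔ phi a b = Real.cos ω / Real.sin ω) ∧
    Real.cot (InnerProductGeometry.angle a (b - a)) = phi a b := by
  obtain ⟨hω0, hωπ⟩ := hω
  have ha : a ≠ 0 := by
    have := h.ne_zero 0
    simpa using this
  have hab : ∀ r : ℝ, r • a ≠ b := (LinearIndependent.pair_iff' ha).1 h
  set θ := InnerProductGeometry.angle a (b - a) with hθ
  -- θ is in the open interval (0, π)
  have hθ0 : θ ≠ 0 := by
    intro h0
    rcases InnerProductGeometry.angle_eq_zero_iff.1 h0 with ⟨-, r, -, hr⟩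
    exact hab (r + 1) (by rw [add_smul, one_smul, ← hr]; abel)
  have hθπ : θ ≠ Real.pi := by
    intro h0
    rcases InnerProductGeometry.angle_eq_pi_iff.1 h0 with ⟨-, r, -, hr⟩
    exact hab (r + 1) (by rw [add_smul, one_smul, ← hr]; abel)
  have hθpos : 0 < θ := lt_of_le_of_ne (InnerProductGeometry.angle_nonneg _ _) (Ne.symm hθ0)
  have hθlt : θ < Real.pi := lt_of_le_of_ne (InnerProductGeometry.angle_le_pi _ _) hθπ
  have hsinθ : 0 < Real.sin θ := Real.sin_pos_of_pos_of_lt_pi hθpos hθlt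
  -- abbreviations
  set N : ℝ := ⟪a, b⟫ with hN
  set A : ℝ := ‖a‖ with hA
  set B : ℝ := ‖b‖ with hB
  set C : ℝ := ‖b - a‖ with hC
  have hApos : 0 < A := norm_pos_iff.2 ha
  have hb : b ≠ 0 := by
    intro h0
    exact hab 0 (by simp [h0])
  have hBpos : 0 < B := norm_pos_iff.2 hb
  have hba : b - a ≠ 0 := by
    intro h0
    exact hab 1 (by rw [one_smul]; exact (sub_eq_zero.1 h0).symm)
  have hCpos : 0 < C := norm_pos_iff.2 hba
  have hinner : ⟪a, b - a⟫ = N - A ^ 2 := by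
    rw [inner_sub_right, real_inner_self_eq_norm_sq]
  have hCsq : C ^ 2 = B ^ 2 - 2 * N + A ^ 2 := by
    rw [hC, norm_sub_sq_real, real_inner_comm, ← hN, ← hA, ← hB]
  -- cosine and sine of θ
  have hcos : Real.cos θ = (N - A ^ 2) / (A * C) := by
    rw [hθ, InnerProductGeometry.cos_angle, hinner]
  have hsin : Real.sin θ * (A * C) = Real.sqrt (A ^ 2 * B ^ 2 - N ^ 2) := by
    have := InnerProductGeometry.sin_angle_mul_norm_mul_norm a (b - a)
    rw [hinner, real_inner_self_eq_norm_sq, real_inner_self_eq_norm_sq, ← hA, ← hC] at this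
    rw [hθ, this]
    congr 1
    rw [hCsq]; ring
  set D : ℝ := Real.sqrt (A ^ 2 * B ^ 2 - N ^ 2) with hD
  have hDpos : 0 < D := by
    rw [← hsin]; positivity
  have hsin' : Real.sin θ = D / (A * C) := by
    field_simp [← hsin]
    rw [← hsin]; ring
  have hdisc : 0 < A ^ 2 * B ^ 2 - N ^ 2 := by
    by_contra h0
    push_neg at h0
    rw [hD, Real.sqrt_eq_zero_of_nonpos h0] at hDpos
    exact lt_irrefl _ hDpos
  have hDsq : D ^ 2 = A ^ 2 * B ^ 2 - N ^ 2 := Real.sq_sqrt hdisc.le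
  -- compute φ
  have hphi : phi a b = (N - A ^ 2) / D := by
    have hκ : kappa a b = N / (A * B) := rfl
    have h1 : 1 - (kappa a b) ^ 2 = (A ^ 2 * B ^ 2 - N ^ 2) / (A * B) ^ 2 := by
      rw [hκ]
      field_simp
    have hsqrt : Real.sqrt (1 - (kappa a b) ^ 2) = D / (A * B) := by
      rw [h1, Real.sqrt_div hdisc.le, Real.sqrt_sq (by positivity), hD]
    rw [phi, hsqrt, hκ, rho, ← hA, ← hB]
    have hA' := hApos.ne'
    have hB' := hBpos.ne'
    have hD' := hDpos.ne'
    field_simp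
  have hcot : Real.cot θ = phi a b := by
    rw [Real.cot_eq_cos_div_sin, hcos, hsin', hphi, div_div_div_eq]
    rw [div_eq_div_iff (by positivity) hDpos.ne']
    ring
  refine ⟨⟨fun he => ?_, fun he => ?_⟩, hcot⟩
  · rw [← hcot, he, Real.cot_eq_cos_div_sin]
  · -- from cot θ = cot ω deduce θ = ω
    have hsinω : 0 < Real.sin ω := Real.sin_pos_of_pos_of_lt_pi hω0 hωπ
    have hcc : Real.cos θ * Real.sin ω = Real.cos ω * Real.sin θ := by
      have h1 : Real.cos θ / Real.sin θ = Real.cos ω / Real.sin ω := by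
        rw [← Real.cot_eq_cos_div_sin, hcot, he]
      field_simp at h1
      linarith [h1]
    have hzero : Real.sin (ω - θ) = 0 := by
      rw [Real.sin_sub]; linarith [hcc]
    have := (Real.sin_eq_zero_iff_of_lt_of_lt (by linarith) (by linarith)).1 hzero
    linarith
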